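/- Let F: C → D and G: D → C be additive functors with G both left and right adjoint to F (an ambidextrous adjunction). If an object m ∈ C is a retract of G(n) for some n ∈ D, then the counit ε_m : G F(m) → m is a split epimorphism and the unit η_m : m → G F(m) is a split monomorphism. -/
import Mathlib


open CategoryTheory

namespace Stmt17

variable {C D : Type*} [Category C] [Category D] [Preadditive C] [Preadditive D]

/-- Let `F : C ⥤ D` and `G : D ⥤ C` be additive functors with `G` both left and right
adjoint to `F` (an ambidextrous adjunction). If `m ∈ C` is a retract of `G(n)` for some
`n ∈ D`, then the counit `ε_m : G F(m) ⟶ m` (of the adjunction `G ⊣ F`) is a split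
epimorphism and the unit `η_m : m ⟶ G F(m)` (of the adjunction `F ⊣ G`) is a split
monomorphism. -/
theorem counit_splitEpi_unit_splitMono
    (F : C ⥤ D) (G : D ⥤ C) [F.Additive] [G.Additive]
    (adj₁ : F ⊣ G) (adj₂ : G ⊣ F)
    (m : C) (n : D)
    (hm : ∃ (α : m ⟶ G.obj n) (β : G.obj n ⟶ m), α ≫ β = 𝟙 m) :
    IsSplitEpi (adj₂.counit.app m) ∧ IsSplitMono (adj₁.unit.app m) := by
  obtain ⟨α, β, hab⟩ := hm
  constructor
  · refine ⟨⟨⟨α ≫ G.map (adj₂.unit.app n) ≫ (F ⋙ G).map β, ?_⟩⟩⟩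
    have hnat := adj₂.counit.naturality β
    have htri := adj₂.left_triangle_components n
    simp only [Category.assoc]
    rw [hnat, ← Category.assoc (G.map (adj₂.unit.app n)), htri]
    simpa using hab
  · refine ⟨⟨⟨(F ⋙ G).map α ≫ G.map (adj₁.counit.app n) ≫ β, ?_⟩⟩⟩
    have hnat := adj₁.unit.naturality α
    have htri := adj₁.right_triangle_components n
    rw [← Category.assoc, ← hnat]
    simp only [Category.assoc]
    rw [← Category.assoc (adj₁.unit.app _), htri]
    simpa using hab

end Stmt17
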